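/- Let X = [0,1]^d, (u^n)_{n≥0} a (t,d)-sequence in base b ≥ 2, and K : X → P(X) a Markov kernel satisfying Assumptions A1 and A2. For k ≥ t and x̃ ∈ X define the dispersion d_X(k, x̃) = sup_{x∈X} min_{0 ≤ n < b^k} ‖F_K^{-1}(x̃, u^n) − x‖_∞. Then sup_{x̃∈X} d_X(k, x̃) → 0 as k → ∞. -/

import Mathlib

open MeasureTheory ProbabilityTheory Set Filter
open scoped Classical

/-- The closed unit cube `[0,1]^d` in `ℝ^d` (modeled as `Fin d → ℝ` with the sup norm). -/
def cube (d : ℕ) : Set (Fin d → ℝ) := {x | ∀ i, x i ∈ Set.Icc (0:ℝ) 1}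

/-- Membership in the `b`-ary box `∏_j [c_j b^{-e_j}, (c_j+1) b^{-e_j})`. -/
def inBaryBox {d : ℕ} (b : ℕ) (e c : Fin d → ℕ) (x : Fin d → ℝ) : Prop :=
  ∀ j, (c j : ℝ) / (b : ℝ) ^ (e j) ≤ x j ∧ x j < ((c j : ℝ) + 1) / (b : ℝ) ^ (e j)

/-- The block `{u^n : A ≤ n < A + b^m}` is a `(t,m,d)`-net in base `b`: every `b`-ary box of
volume `b^{t-m}` contains exactly `b^t` points of the block. -/
def IsNetBlock {d : ℕ} (b t m : ℕ) (u : ℕ → Fin d → ℝ) (A : ℕ) : Prop :=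
  ∀ e c : Fin d → ℕ, (∀ j, c j < b ^ (e j)) → (∑ j, e j) = m - t →
    ((Finset.Ico A (A + b ^ m)).filter (fun n => inBaryBox b e c (u n))).card = b ^ t

/-- `(u^n)_{n≥0}` is a `(t,d)`-sequence in base `b`. -/
def IsTSeq {d : ℕ} (b t : ℕ) (u : ℕ → Fin d → ℝ) : Prop :=
  (∀ n i, u n i ∈ Set.Ico (0:ℝ) 1) ∧
  ∀ a m : ℕ, t ≤ m → IsNetBlock b t m u (a * b ^ m)

/-- `(v^n)_{n≥0}` is a scalar `(t,1)`-sequence in base `b`. -/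
def IsTSeq1 (b t : ℕ) (v : ℕ → ℝ) : Prop :=
  (∀ n, v n ∈ Set.Ico (0:ℝ) 1) ∧
  ∀ a m : ℕ, t ≤ m → ∀ c : ℕ, c < b ^ (m - t) →
    ((Finset.Ico (a * b ^ m) (a * b ^ m + b ^ m)).filter
      (fun n => (c : ℝ) / (b:ℝ) ^ (m - t) ≤ v n ∧ v n < ((c : ℝ) + 1) / (b:ℝ) ^ (m - t))).card
      = b ^ t

/-- `k_n`: the smallest integer `k` such that `n < b^k`. -/
noncomputable def kOf (b n : ℕ) : ℕ := sInf {k | n < b ^ k}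

section Rosenblatt

variable {d : ℕ}

/-- Marginal of the density `κ(·|x)` over the first `i` coordinates: the first `i` coordinates
are fixed to those of `y`, the remaining ones are integrated out over the unit cube. -/
noncomputable def marg (κ : (Fin d → ℝ) → (Fin d → ℝ) → ℝ) (i : ℕ) (x y : Fin d → ℝ) : ℝ :=
  ∫ z in cube d, κ x (fun j => if (j : ℕ) < i then y j else z j)

/-- `K_i(y_i | y_{1:i-1}, x)`: the `i`-th conditional density of the kernel density `κ`. -/
noncomputable def condDensity (κ : (Fin d → ℝ) → (Fin d → ℝ) → ℝ) (i : Fin d)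
    (x y : Fin d → ℝ) : ℝ :=
  marg κ ((i : ℕ) + 1) x y / marg κ (i : ℕ) x y

/-- `F_{K_i}(s | x, y_{1:i-1})`: the `i`-th conditional CDF of the kernel density `κ`. -/
noncomputable def condCDF' (κ : (Fin d → ℝ) → (Fin d → ℝ) → ℝ) (i : Fin d)
    (x y : Fin d → ℝ) (s : ℝ) : ℝ :=
  ∫ r in (0:ℝ)..s, condDensity κ i x (Function.update y i r)

/-- The Rosenblatt transform `F_K(x,·)` of the kernel with density `κ`. -/
noncomputable def Ros (κ : (Fin d → ℝ) → (Fin d → ℝ) → ℝ) (x y : Fin d → ℝ) : Fin d → ℝ :=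
  fun i => condCDF' κ i x y (y i)

/-- Assumption (A1): each conditional CDF is strictly increasing in its main argument. -/
def A1 (κ : (Fin d → ℝ) → (Fin d → ℝ) → ℝ) : Prop :=
  ∀ x ∈ cube d, ∀ y ∈ cube d, ∀ i : Fin d,
    StrictMonoOn (fun s => condCDF' κ i x y s) (Set.Icc (0:ℝ) 1)

/-- Assumption (A2): the density `κ` is continuous on `X²` and bounded below by `Klow > 0`. -/
def A2 (κ : (Fin d → ℝ) → (Fin d → ℝ) → ℝ) (Klow : ℝ) : Prop :=
  ContinuousOn (fun p : (Fin d → ℝ) × (Fin d → ℝ) => κ p.1 p.2) ((cube d) ×ˢ (cube d)) ∧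
  0 < Klow ∧ ∀ x ∈ cube d, ∀ y ∈ cube d, Klow ≤ κ x y

/-- `κ` is a probability density in its second argument, w.r.t. Lebesgue measure on the cube. -/
def IsMarkovDensity (κ : (Fin d → ℝ) → (Fin d → ℝ) → ℝ) : Prop :=
  ∀ x ∈ cube d, (∀ y ∈ cube d, 0 ≤ κ x y) ∧ ∫ y in cube d, κ x y = 1

/-- `G` is the inverse Rosenblatt transform associated with `κ`. -/
def IsInvRos (κ : (Fin d → ℝ) → (Fin d → ℝ) → ℝ)
    (G : (Fin d → ℝ) → (Fin d → ℝ) → (Fin d → ℝ)) : Prop :=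
  ∀ x ∈ cube d, ∀ u : Fin d → ℝ, (∀ i, u i ∈ Set.Icc (0:ℝ) 1) →
    G x u ∈ cube d ∧ Ros κ x (G x u) = u

/-- The sup-norm ball `B_δ(x)` of radius `δ` around `x`, intersected with the cube. -/
def ball' {d : ℕ} (δ : ℝ) (x : Fin d → ℝ) : Set (Fin d → ℝ) :=
  {y ∈ cube d | ‖y - x‖ ≤ δ}

end Rosenblatt


section DispersionAux

open intervalIntegral

lemma cube_eq_pi (d : ℕ) : cube d = Set.pi Set.univ (fun _ : Fin d => Set.Icc (0:ℝ) 1) := by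
  ext x
  constructor
  · intro h i _; exact h i
  · intro h i; exact h i (Set.mem_univ i)

lemma isCompact_cube (d : ℕ) : IsCompact (cube d) := by
  rw [cube_eq_pi]; exact isCompact_univ_pi fun _ => isCompact_Icc

lemma measurableSet_cube (d : ℕ) : MeasurableSet (cube d) := by
  rw [cube_eq_pi]; exact MeasurableSet.univ_pi fun _ => measurableSet_Icc

lemma volume_cube (d : ℕ) : volume (cube d) = 1 := by
  rw [cube_eq_pi, volume_pi_pi]; simp

lemma volume_cube_toReal (d : ℕ) : (volume (cube d)).toReal = 1 := by rw [volume_cube]; rfl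

lemma zero_mem_cube (d : ℕ) : (fun _ : Fin d => (0:ℝ)) ∈ cube d :=
  fun _ => ⟨le_refl _, zero_le_one⟩

/-- the function integrated in `marg`. -/
def mixf {d : ℕ} (i : ℕ) (y z : Fin d → ℝ) : Fin d → ℝ :=
  fun j => if (j : ℕ) < i then y j else z j

lemma marg_def {d : ℕ} (κ : (Fin d → ℝ) → (Fin d → ℝ) → ℝ) (i : ℕ) (x y : Fin d → ℝ) :
    marg κ i x y = ∫ z in cube d, κ x (mixf i y z) := rfl

lemma mixf_mem {d : ℕ} {i : ℕ} {y z : Fin d → ℝ} (hy : y ∈ cube d) (hz : z ∈ cube d) :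
    mixf i y z ∈ cube d := by
  intro j; unfold mixf
  split_ifs; exacts [hy j, hz j]

lemma update_mem_cube {d : ℕ} {y : Fin d → ℝ} (hy : y ∈ cube d) (i : Fin d) {r : ℝ}
    (hr : r ∈ Set.Icc (0:ℝ) 1) : Function.update y i r ∈ cube d := by
  intro j
  rcases eq_or_ne j i with h | h
  · subst h; simpa using hr
  · simpa [Function.update_apply, h] using hy j

lemma continuous_mixf {d : ℕ} (i : ℕ) (y : Fin d → ℝ) : Continuous (fun z => mixf i y z) := by
  refine continuous_pi fun j => ?_
  unfold mixf
  split_ifs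
  · exact continuous_const
  · exact continuous_apply j

lemma dist_mixf_le {d : ℕ} (i : ℕ) (y y' z : Fin d → ℝ) :
    dist (mixf i y z) (mixf i y' z) ≤ dist y y' := by
  refine (dist_pi_le_iff dist_nonneg).2 fun j => ?_
  unfold mixf
  split_ifs
  · exact dist_le_pi_dist y y' j
  · simpa using dist_nonneg

lemma dist_update_le {d : ℕ} (y y' : Fin d → ℝ) (i : Fin d) (r : ℝ) :
    dist (Function.update y i r) (Function.update y' i r) ≤ dist y y' := by
  refine (dist_pi_le_iff dist_nonneg).2 fun j => ?_
  rcases eq_or_ne j i with h | h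
  · subst h; simpa using dist_nonneg
  · simp only [Function.update_apply, if_neg h]
    exact dist_le_pi_dist y y' j

lemma dist_update_update_le {d : ℕ} (y : Fin d → ℝ) (i : Fin d) (r r' : ℝ) :
    dist (Function.update y i r) (Function.update y i r') ≤ dist r r' := by
  refine (dist_pi_le_iff dist_nonneg).2 fun j => ?_
  rcases eq_or_ne j i with h | h
  · subst h; simpa using dist_nonneg
  · simpa [Function.update_apply, if_neg h] using dist_nonneg

lemma marg_congr {d : ℕ} (κ : (Fin d → ℝ) → (Fin d → ℝ) → ℝ) (i : ℕ) (x : Fin d → ℝ)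
    {y y' : Fin d → ℝ} (h : ∀ j : Fin d, (j : ℕ) < i → y j = y' j) :
    marg κ i x y = marg κ i x y' := by
  unfold marg
  congr 1
  funext z
  congr 1
  funext j
  by_cases hj : (j : ℕ) < i
  · simp [hj, h j hj]
  · simp [hj]


lemma insertNth_mem_cube {n : ℕ} (i : Fin (n+1)) {r : ℝ} {w : Fin n → ℝ}
    (hr : r ∈ Set.Icc (0:ℝ) 1) (hw : w ∈ cube n) : i.insertNth r w ∈ cube (n+1) := by
  intro j
  refine Fin.succAboveCases i ?_ ?_ j
  · simpa [Fin.insertNth_apply_same] using hr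
  · intro k; simpa [Fin.insertNth_apply_succAbove] using hw k

lemma continuous_insertNth {n : ℕ} (i : Fin (n+1)) :
    Continuous (fun p : ℝ × (Fin n → ℝ) => (i.insertNth p.1 p.2 : Fin (n+1) → ℝ)) := by
  refine continuous_pi fun j => ?_
  rcases eq_or_ne j i with rfl | hj
  · simpa [Fin.insertNth_apply_same] using (continuous_fst : Continuous fun p : ℝ × (Fin n → ℝ) => p.1)
  · obtain ⟨k, rfl⟩ := Fin.exists_succAbove_eq hj
    simpa [Fin.insertNth_apply_succAbove, Function.comp_def] using
      ((continuous_apply k).comp (continuous_snd : Continuous fun p : ℝ × (Fin n → ℝ) => p.2))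

lemma cube_split {n : ℕ} (i : Fin (n+1)) {g : (Fin (n+1) → ℝ) → ℝ}
    (hg : ContinuousOn g (cube (n+1))) :
    ∫ z in cube (n+1), g z = ∫ r in Set.Icc (0:ℝ) 1, ∫ w in cube n, g (i.insertNth r w) := by
  set e := MeasurableEquiv.piFinSuccAbove (fun _ : Fin (n+1) => ℝ) i with he
  have hMP : MeasurePreserving e volume volume := volume_preserving_piFinSuccAbove _ i
  set S : Set (ℝ × (Fin n → ℝ)) := (Set.Icc (0:ℝ) 1) ×ˢ cube n with hS
  have hez : ∀ z : Fin (n+1) → ℝ, e z = (z i, fun k => z (i.succAbove k)) := fun z => rfl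
  have hpre : cube (n+1) = e ⁻¹' S := by
    ext z
    constructor
    · intro hz
      refine Set.mem_preimage.2 ?_
      rw [hez z]
      exact Set.mk_mem_prod (hz i) (fun k => hz (i.succAbove k))
    · intro hz
      have hz' : (z i, fun k => z (i.succAbove k)) ∈ S := by rw [← hez z]; exact hz
      obtain ⟨h1, h2⟩ := hz'
      exact (Fin.forall_iff_succAbove (P := fun j => z j ∈ Set.Icc (0:ℝ) 1) i).2 ⟨h1, h2⟩
  have hInt : IntegrableOn (fun p : ℝ × (Fin n → ℝ) => g (i.insertNth p.1 p.2)) S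
      ((volume : Measure ℝ).prod (volume : Measure (Fin n → ℝ))) := by
    have h1 : IntegrableOn (fun p : ℝ × (Fin n → ℝ) => g (i.insertNth p.1 p.2)) S volume := by
      refine ContinuousOn.integrableOn_compact (isCompact_Icc.prod (isCompact_cube n)) ?_
      exact hg.comp (continuous_insertNth i).continuousOn
        (fun p hp => insertNth_mem_cube i hp.1 hp.2)
    rwa [MeasureTheory.Measure.volume_eq_prod] at h1
  have hstep := hMP.setIntegral_preimage_emb e.measurableEmbedding (fun w => g (e.symm w)) S
  simp only [MeasurableEquiv.symm_apply_apply] at hstep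
  have hesymm : ∀ w : ℝ × (Fin n → ℝ), e.symm w = i.insertNth w.1 w.2 := fun w => rfl
  calc ∫ z in cube (n+1), g z
      = ∫ w in S, g (e.symm w) := by rw [hpre]; exact hstep
    _ = ∫ w in S, g (i.insertNth w.1 w.2) := by
        refine setIntegral_congr_fun (measurableSet_Icc.prod (measurableSet_cube n))
          (fun w _ => ?_)
        rw [hesymm]
    _ = ∫ r in Set.Icc (0:ℝ) 1, ∫ w in cube n, g (i.insertNth r w) := by
        rw [hS, MeasureTheory.Measure.volume_eq_prod]
        exact setIntegral_prod _ hInt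



lemma condCDF'_congr {d : ℕ} (κ : (Fin d → ℝ) → (Fin d → ℝ) → ℝ) (i : Fin d)
    (x : Fin d → ℝ) {y y' : Fin d → ℝ} (h : ∀ j : Fin d, (j : ℕ) < (i : ℕ) → y j = y' j)
    (s : ℝ) : condCDF' κ i x y s = condCDF' κ i x y' s := by
  unfold condCDF'
  refine intervalIntegral.integral_congr (fun r _ => ?_)
  unfold condDensity
  have h1 : marg κ ((i:ℕ)+1) x (Function.update y i r)
      = marg κ ((i:ℕ)+1) x (Function.update y' i r) := by
    refine marg_congr κ _ x (fun j hj => ?_)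
    rcases eq_or_ne j i with rfl | hji
    · simp
    · rw [Function.update_of_ne hji, Function.update_of_ne hji]
      have hne : (j:ℕ) ≠ (i:ℕ) := fun hc => hji (Fin.ext hc)
      exact h j (by omega)
  have h2 : marg κ (i:ℕ) x (Function.update y i r)
      = marg κ (i:ℕ) x (Function.update y' i r) := by
    refine marg_congr κ _ x (fun j hj => ?_)
    have hji : j ≠ i := fun hc => by simp [hc] at hj
    rw [Function.update_of_ne hji, Function.update_of_ne hji]
    exact h j hj
  rw [h1, h2]


section Kernel

variable {d : ℕ} {κ : (Fin d → ℝ) → (Fin d → ℝ) → ℝ} {Klow Kup : ℝ}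

lemma integrableOn_mixf
    (hcont : ContinuousOn (fun p : (Fin d → ℝ) × (Fin d → ℝ) => κ p.1 p.2) ((cube d) ×ˢ (cube d)))
    {x y : Fin d → ℝ} (hx : x ∈ cube d) (hy : y ∈ cube d) (i : ℕ) :
    IntegrableOn (fun z => κ x (mixf i y z)) (cube d) := by
  refine ContinuousOn.integrableOn_compact (isCompact_cube d) ?_
  exact hcont.comp ((continuous_const.prodMk (continuous_mixf i y)).continuousOn)
    (fun z hz => Set.mk_mem_prod hx (mixf_mem hy hz))

lemma marg_le_upper
    (hcont : ContinuousOn (fun p : (Fin d → ℝ) × (Fin d → ℝ) => κ p.1 p.2) ((cube d) ×ˢ (cube d)))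
    (hup : ∀ x ∈ cube d, ∀ y ∈ cube d, κ x y ≤ Kup)
    {x y : Fin d → ℝ} (hx : x ∈ cube d) (hy : y ∈ cube d) (i : ℕ) :
    marg κ i x y ≤ Kup := by
  rw [marg_def]
  have h1 : ∫ _z in cube d, Kup ∂(volume) = Kup := by
    rw [setIntegral_const, measureReal_def, volume_cube_toReal, one_smul]
  rw [← h1]
  refine setIntegral_mono_on (integrableOn_mixf hcont hx hy i) ?_ (measurableSet_cube d) ?_
  · exact integrableOn_const (by rw [volume_cube]; exact ENNReal.one_ne_top)
  · exact fun z hz => hup x hx _ (mixf_mem hy hz)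

lemma marg_ge_lower
    (hcont : ContinuousOn (fun p : (Fin d → ℝ) × (Fin d → ℝ) => κ p.1 p.2) ((cube d) ×ˢ (cube d)))
    (hlow : ∀ x ∈ cube d, ∀ y ∈ cube d, Klow ≤ κ x y)
    {x y : Fin d → ℝ} (hx : x ∈ cube d) (hy : y ∈ cube d) (i : ℕ) :
    Klow ≤ marg κ i x y := by
  rw [marg_def]
  have h1 : ∫ _z in cube d, Klow ∂(volume) = Klow := by
    rw [setIntegral_const, measureReal_def, volume_cube_toReal, one_smul]
  rw [← h1]
  refine setIntegral_mono_on ?_ (integrableOn_mixf hcont hx hy i) (measurableSet_cube d) ?_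
  · exact integrableOn_const (by rw [volume_cube]; exact ENNReal.one_ne_top)
  · exact fun z hz => hlow x hx _ (mixf_mem hy hz)

lemma marg_modulus
    (hcont : ContinuousOn (fun p : (Fin d → ℝ) × (Fin d → ℝ) => κ p.1 p.2) ((cube d) ×ˢ (cube d))) :
    ∀ α : ℝ, 0 < α → ∃ δ : ℝ, 0 < δ ∧ ∀ (i : ℕ), ∀ x ∈ cube d, ∀ y ∈ cube d, ∀ y' ∈ cube d,
      dist y y' ≤ δ → |marg κ i x y - marg κ i x y'| ≤ α := by
  intro α hα
  have huc : UniformContinuousOn (fun p : (Fin d → ℝ) × (Fin d → ℝ) => κ p.1 p.2)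
      ((cube d) ×ˢ (cube d)) :=
    (((isCompact_cube d).prod (isCompact_cube d)).uniformContinuousOn_of_continuous hcont)
  rw [Metric.uniformContinuousOn_iff] at huc
  obtain ⟨δ, hδ, H⟩ := huc α hα
  refine ⟨δ/2, by positivity, fun i x hx y hy y' hy' hyy' => ?_⟩
  have hint1 := integrableOn_mixf hcont hx hy i
  have hint2 := integrableOn_mixf hcont hx hy' i
  rw [marg_def, marg_def, ← integral_sub hint1 hint2]
  have hbound : ∀ z ∈ cube d, ‖κ x (mixf i y z) - κ x (mixf i y' z)‖ ≤ α := by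
    intro z hz
    have hd : dist ((x, mixf i y z) : (Fin d → ℝ) × (Fin d → ℝ)) (x, mixf i y' z) < δ := by
      rw [Prod.dist_eq]
      have := (dist_mixf_le i y y' z).trans hyy'
      simp only [dist_self]
      calc max 0 (dist (mixf i y z) (mixf i y' z)) ≤ max 0 (δ/2) := by
            exact max_le_max (le_refl _) ((dist_mixf_le i y y' z).trans hyy')
        _ < δ := by rw [max_eq_right (by positivity : (0:ℝ) ≤ δ/2)]; linarith
    have := H (x, mixf i y z) (Set.mk_mem_prod hx (mixf_mem hy hz))
      (x, mixf i y' z) (Set.mk_mem_prod hx (mixf_mem hy' hz)) hd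
    rw [Real.dist_eq] at this
    exact (le_of_lt this)
  calc ‖∫ z in cube d, (κ x (mixf i y z) - κ x (mixf i y' z))‖
      ≤ α * (volume (cube d)).toReal :=
        norm_setIntegral_le_of_norm_le_const (by rw [volume_cube]; exact ENNReal.one_lt_top)
          hbound
    _ = α := by rw [volume_cube_toReal, mul_one]


variable (hcont : ContinuousOn (fun p : (Fin d → ℝ) × (Fin d → ℝ) => κ p.1 p.2)
    ((cube d) ×ˢ (cube d)))
  (hKlow : 0 < Klow)
  (hlow : ∀ x ∈ cube d, ∀ y ∈ cube d, Klow ≤ κ x y)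
  (hup : ∀ x ∈ cube d, ∀ y ∈ cube d, κ x y ≤ Kup)

include hcont hKlow hlow hup in
lemma Klow_le_Kup : Klow ≤ Kup :=
  le_trans (hlow _ (zero_mem_cube d) _ (zero_mem_cube d))
    (hup _ (zero_mem_cube d) _ (zero_mem_cube d))

include hcont hKlow hlow hup in
lemma condDensity_lower {x y : Fin d → ℝ} (hx : x ∈ cube d) (hy : y ∈ cube d) (i : Fin d) :
    Klow / Kup ≤ condDensity κ i x y := by
  have hKup : 0 < Kup := lt_of_lt_of_le hKlow (Klow_le_Kup hcont hKlow hlow hup)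
  unfold condDensity
  refine div_le_div₀ (le_trans hKlow.le (marg_ge_lower hcont hlow hx hy _)) ?_ ?_ ?_
  · exact marg_ge_lower hcont hlow hx hy _
  · exact lt_of_lt_of_le hKlow (marg_ge_lower hcont hlow hx hy _)
  · exact marg_le_upper hcont hup hx hy _

include hcont hKlow hlow hup in
lemma condDensity_upper {x y : Fin d → ℝ} (hx : x ∈ cube d) (hy : y ∈ cube d) (i : Fin d) :
    condDensity κ i x y ≤ Kup / Klow := by
  unfold condDensity
  exact div_le_div₀ (le_trans hKlow.le (Klow_le_Kup hcont hKlow hlow hup))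
    (marg_le_upper hcont hup hx hy _) hKlow (marg_ge_lower hcont hlow hx hy _)

lemma condDensity_update_eq (i : Fin d) (x y : Fin d → ℝ) (r : ℝ) :
    condDensity κ i x (Function.update y i r)
      = marg κ ((i : ℕ) + 1) x (Function.update y i r) / marg κ (i : ℕ) x y := by
  unfold condDensity
  rw [marg_congr κ (i : ℕ) x
    (fun j hj => Function.update_of_ne (by exact fun hji => by simp [hji] at hj) r y)]

include hcont in
lemma continuousOn_marg_update {x y : Fin d → ℝ} (hx : x ∈ cube d) (hy : y ∈ cube d)
    (i' : ℕ) (i : Fin d) :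
    ContinuousOn (fun r => marg κ i' x (Function.update y i r)) (Set.Icc (0:ℝ) 1) := by
  rw [Metric.continuousOn_iff]
  intro r hr α hα
  obtain ⟨δ, hδ, H⟩ := marg_modulus hcont (α/2) (by positivity)
  refine ⟨δ, hδ, fun r' hr' hrr' => ?_⟩
  have h1 := H i' x hx (Function.update y i r') (update_mem_cube hy i hr')
    (Function.update y i r) (update_mem_cube hy i hr)
    ((dist_update_update_le y i r' r).trans (le_of_lt hrr'))
  rw [Real.dist_eq]
  calc |marg κ i' x (Function.update y i r') - marg κ i' x (Function.update y i r)| ≤ α/2 := h1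
    _ < α := by linarith

include hcont hKlow hlow in
lemma intervalIntegrable_condDensity {x y : Fin d → ℝ} (hx : x ∈ cube d) (hy : y ∈ cube d)
    (i : Fin d) {a b' : ℝ} (ha : a ∈ Set.Icc (0:ℝ) 1) (hb : b' ∈ Set.Icc (0:ℝ) 1) :
    IntervalIntegrable (fun r => condDensity κ i x (Function.update y i r)) volume a b' := by
  apply ContinuousOn.intervalIntegrable
  have hsub : Set.uIcc a b' ⊆ Set.Icc (0:ℝ) 1 := Set.uIcc_subset_Icc ha hb
  refine ContinuousOn.mono ?_ hsub
  have heq : ∀ r : ℝ, condDensity κ i x (Function.update y i r)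
      = marg κ ((i : ℕ) + 1) x (Function.update y i r) / marg κ (i : ℕ) x y :=
    fun r => condDensity_update_eq i x y r
  simp only [heq]
  exact (continuousOn_marg_update hcont hx hy _ i).div_const _

include hcont hKlow hlow hup in
lemma condCDF'_gap {x y : Fin d → ℝ} (hx : x ∈ cube d) (hy : y ∈ cube d) (i : Fin d)
    {a b' : ℝ} (ha : a ∈ Set.Icc (0:ℝ) 1) (hb : b' ∈ Set.Icc (0:ℝ) 1) (hab : a ≤ b') :
    Klow / Kup * (b' - a) ≤ condCDF' κ i x y b' - condCDF' κ i x y a := by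
  have h01 : (0:ℝ) ∈ Set.Icc (0:ℝ) 1 := ⟨le_refl _, zero_le_one⟩
  unfold condCDF'
  rw [intervalIntegral.integral_interval_sub_left
    (intervalIntegrable_condDensity hcont hKlow hlow hx hy i h01 hb)
    (intervalIntegrable_condDensity hcont hKlow hlow hx hy i h01 ha)]
  have h2 : Klow / Kup * (b' - a) = ∫ _r in a..b', (Klow / Kup) := by
    rw [intervalIntegral.integral_const, smul_eq_mul]; ring
  rw [h2]
  refine intervalIntegral.integral_mono_on hab intervalIntegrable_const
    (intervalIntegrable_condDensity hcont hKlow hlow hx hy i ha hb) ?_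
  intro r hr
  have hrIcc : r ∈ Set.Icc (0:ℝ) 1 := ⟨le_trans ha.1 hr.1, le_trans hr.2 hb.2⟩
  exact condDensity_lower hcont hKlow hlow hup hx (update_mem_cube hy i hrIcc) i

include hcont hKlow hlow hup in
lemma condCDF'_nonneg {x y : Fin d → ℝ} (hx : x ∈ cube d) (hy : y ∈ cube d) (i : Fin d)
    {a : ℝ} (ha : a ∈ Set.Icc (0:ℝ) 1) : 0 ≤ condCDF' κ i x y a := by
  have h01 : (0:ℝ) ∈ Set.Icc (0:ℝ) 1 := ⟨le_refl _, zero_le_one⟩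
  have h1 := condCDF'_gap hcont hKlow hlow hup hx hy i h01 ha ha.1
  have h2 : condCDF' κ i x y 0 = 0 := intervalIntegral.integral_same
  have hKup : 0 < Kup := lt_of_lt_of_le hKlow (Klow_le_Kup hcont hKlow hlow hup)
  nlinarith [div_pos hKlow hKup, ha.1]

include hcont hKlow hlow hup in
lemma condCDF'_modulus :
    ∀ α : ℝ, 0 < α → ∃ δ : ℝ, 0 < δ ∧ ∀ (i : Fin d), ∀ x ∈ cube d, ∀ y ∈ cube d, ∀ y' ∈ cube d,
      dist y y' ≤ δ → ∀ s ∈ Set.Icc (0:ℝ) 1, |condCDF' κ i x y s - condCDF' κ i x y' s| ≤ α := by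
  intro α hα
  have hKup : 0 < Kup := lt_of_lt_of_le hKlow (Klow_le_Kup hcont hKlow hlow hup)
  set β : ℝ := α * Klow ^ 2 / (2 * Kup) with hβdef
  have hβ : 0 < β := by positivity
  obtain ⟨δ, hδ, H⟩ := marg_modulus hcont β hβ
  refine ⟨δ, hδ, fun i x hx y hy y' hy' hyy' s hs => ?_⟩
  have hs0 : (0:ℝ) ∈ Set.Icc (0:ℝ) 1 := ⟨le_refl _, zero_le_one⟩
  unfold condCDF'
  rw [← intervalIntegral.integral_sub
    (intervalIntegrable_condDensity hcont hKlow hlow hx hy i hs0 hs)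
    (intervalIntegrable_condDensity hcont hKlow hlow hx hy' i hs0 hs)]
  have hptw : ∀ r ∈ Set.uIoc (0:ℝ) s,
      ‖condDensity κ i x (Function.update y i r) - condDensity κ i x (Function.update y' i r)‖
        ≤ α := by
    intro r hr
    have hrIcc : r ∈ Set.Icc (0:ℝ) 1 := by
      rw [Set.uIoc_of_le hs.1] at hr
      exact ⟨le_of_lt hr.1, le_trans hr.2 hs.2⟩
    have hymem := update_mem_cube hy i hrIcc
    have hy'mem := update_mem_cube hy' i hrIcc
    set p := marg κ ((i:ℕ)+1) x (Function.update y i r) with hp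
    set p' := marg κ ((i:ℕ)+1) x (Function.update y' i r) with hp'
    set q := marg κ (i:ℕ) x (Function.update y i r) with hq
    set q' := marg κ (i:ℕ) x (Function.update y' i r) with hq'
    have hqKl : Klow ≤ q := marg_ge_lower hcont hlow hx hymem _
    have hq'Kl : Klow ≤ q' := marg_ge_lower hcont hlow hx hy'mem _
    have hpu : p ≤ Kup := marg_le_upper hcont hup hx hymem _
    have hp'u : p' ≤ Kup := marg_le_upper hcont hup hx hy'mem _
    have hp'l : Klow ≤ p' := marg_ge_lower hcont hlow hx hy'mem _
    have hq'u : q' ≤ Kup := marg_le_upper hcont hup hx hy'mem _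
    have hdistu : dist (Function.update y i r) (Function.update y' i r) ≤ δ :=
      (dist_update_le y y' i r).trans hyy'
    have hpp' : |p - p'| ≤ β := H _ x hx _ hymem _ hy'mem hdistu
    have hqq' : |q - q'| ≤ β := H _ x hx _ hymem _ hy'mem hdistu
    have hq0 : (0:ℝ) < q := lt_of_lt_of_le hKlow hqKl
    have hq'0 : (0:ℝ) < q' := lt_of_lt_of_le hKlow hq'Kl
    have hcd : condDensity κ i x (Function.update y i r) = p / q := rfl
    have hcd' : condDensity κ i x (Function.update y' i r) = p' / q' := rfl
    rw [Real.norm_eq_abs, hcd, hcd', div_sub_div _ _ (ne_of_gt hq0) (ne_of_gt hq'0), abs_div]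
    have hnum : |p * q' - q * p'| ≤ 2 * β * Kup := by
      have h1 : p * q' - q * p' = (p - p') * q' + p' * (q' - q) := by ring
      rw [h1]
      calc |(p - p') * q' + p' * (q' - q)| ≤ |(p - p') * q'| + |p' * (q' - q)| := abs_add_le _ _
        _ = |p - p'| * |q'| + |p'| * |q' - q| := by rw [abs_mul, abs_mul]
        _ ≤ β * Kup + Kup * β := by
            refine add_le_add (mul_le_mul hpp' ?_ (abs_nonneg _) hβ.le)
              (mul_le_mul ?_ ?_ (abs_nonneg _) hKup.le)
            · rw [abs_of_pos hq'0]; exact hq'u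
            · rw [abs_of_nonneg (le_trans hKlow.le hp'l)]; exact hp'u
            · rw [abs_sub_comm]; exact hqq'
        _ = 2 * β * Kup := by ring
    have hden : Klow ^ 2 ≤ |q * q'| := by
      rw [abs_of_pos (mul_pos hq0 hq'0)]
      nlinarith
    calc |p * q' - q * p'| / |q * q'| ≤ (2 * β * Kup) / Klow ^ 2 := by
          refine div_le_div₀ (by positivity) hnum (by positivity) hden
      _ = α := by rw [hβdef]; field_simp
  calc ‖∫ r in (0:ℝ)..s, (condDensity κ i x (Function.update y i r)
          - condDensity κ i x (Function.update y' i r))‖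
      ≤ α * |s - 0| := intervalIntegral.norm_integral_le_of_norm_le_const hptw
    _ ≤ α := by
        rw [sub_zero, abs_of_nonneg hs.1]
        nlinarith [hs.2]

include hcont hKlow hlow in
lemma condCDF'_one {x y : Fin d → ℝ} (hx : x ∈ cube d) (hy : y ∈ cube d) (i : Fin d) :
    condCDF' κ i x y 1 = 1 := by
  have hd : 0 < d := Nat.lt_of_le_of_lt (Nat.zero_le _) i.isLt
  obtain ⟨n, rfl⟩ : ∃ n, d = n + 1 := ⟨d - 1, by omega⟩
  have hD : 0 < marg κ (i:ℕ) x y := lt_of_lt_of_le hKlow (marg_ge_lower hcont hlow hx hy _)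
  set f : (Fin (n+1) → ℝ) → ℝ := fun w => κ x (mixf (i:ℕ) y w) with hf
  have hfc : ContinuousOn f (cube (n+1)) :=
    hcont.comp ((continuous_const.prodMk (continuous_mixf _ y)).continuousOn)
      (fun z hz => Set.mk_mem_prod hx (mixf_mem hy hz))
  have h1 : ∀ (z : Fin (n+1) → ℝ) (r : ℝ),
      mixf ((i:ℕ)+1) (Function.update y i r) z = mixf (i:ℕ) y (Function.update z i r) := by
    intro z r; funext j
    rcases lt_trichotomy ((j:ℕ)) ((i:ℕ)) with h | h | h
    · have hji : j ≠ i := fun hc => by simp [hc] at h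
      simp only [mixf]
      rw [if_pos (Nat.lt_succ_of_lt h), if_pos h, Function.update_of_ne hji]
    · have hji : j = i := Fin.ext h
      subst hji
      simp only [mixf]
      rw [if_pos (Nat.lt_succ_self _), if_neg (lt_irrefl _), Function.update_self,
        Function.update_self]
    · have hji : j ≠ i := fun hc => by simp [hc] at h
      have hc1 : ¬ ((j:ℕ) < (i:ℕ)+1) := by omega
      have hc2 : ¬ ((j:ℕ) < (i:ℕ)) := by omega
      simp only [mixf]
      rw [if_neg hc1, if_neg hc2, Function.update_of_ne hji]
  have h2 : ∀ (s : ℝ) (w : Fin n → ℝ) (r : ℝ),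
      Function.update (i.insertNth s w : Fin (n+1) → ℝ) i r
        = (i.insertNth r w : Fin (n+1) → ℝ) := by
    intro s w r; funext j
    rcases eq_or_ne j i with rfl | hj
    · rw [Function.update_self, Fin.insertNth_apply_same]
    · obtain ⟨k, rfl⟩ := Fin.exists_succAbove_eq hj
      rw [Function.update_of_ne (Fin.succAbove_ne i k), Fin.insertNth_apply_succAbove,
        Fin.insertNth_apply_succAbove]
  have key1 : ∀ r ∈ Set.Icc (0:ℝ) 1, marg κ ((i:ℕ)+1) x (Function.update y i r)
      = ∫ w in cube n, f (i.insertNth r w) := by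
    intro r hr
    rw [marg_def]
    have e1 : ∫ z in cube (n+1), κ x (mixf ((i:ℕ)+1) (Function.update y i r) z)
        = ∫ z in cube (n+1), f (Function.update z i r) := by
      refine setIntegral_congr_fun (measurableSet_cube _) (fun z _ => ?_)
      rw [hf]; dsimp only; rw [h1 z r]
    rw [e1]
    have hcont2 : ContinuousOn (fun z : Fin (n+1) → ℝ => f (Function.update z i r))
        (cube (n+1)) := by
      refine hfc.comp ?_ (fun z hz => update_mem_cube hz i hr)
      refine (continuous_pi fun j => ?_).continuousOn
      by_cases hji : j = i
      · simpa [Function.update_apply, hji] using (continuous_const : Continuous fun _ : Fin (n+1) → ℝ => r)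
      · simpa [Function.update_apply, hji] using continuous_apply j
    rw [cube_split i hcont2]
    have e2 : ∀ s ∈ Set.Icc (0:ℝ) 1,
        ∫ w in cube n, f (Function.update (i.insertNth s w) i r)
          = ∫ w in cube n, f (i.insertNth r w) := by
      intro s _
      exact setIntegral_congr_fun (measurableSet_cube _) (fun w _ => by rw [h2])
    rw [setIntegral_congr_fun measurableSet_Icc (fun s hs => e2 s hs)]
    rw [setIntegral_const, measureReal_def, Real.volume_Icc]
    simp
  have key2 : marg κ (i:ℕ) x y = ∫ r in Set.Icc (0:ℝ) 1, ∫ w in cube n, f (i.insertNth r w) := by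
    rw [marg_def]; exact cube_split i hfc
  have hnum : ∫ r in (0:ℝ)..1, marg κ ((i:ℕ)+1) x (Function.update y i r)
      = marg κ (i:ℕ) x y := by
    rw [intervalIntegral.integral_of_le zero_le_one, ← integral_Icc_eq_integral_Ioc,
      setIntegral_congr_fun measurableSet_Icc (fun r hr => key1 r hr)]
    exact key2.symm
  have heq : ∀ r : ℝ, condDensity κ i x (Function.update y i r)
      = marg κ ((i:ℕ)+1) x (Function.update y i r) / marg κ (i:ℕ) x y :=
    condDensity_update_eq i x y
  unfold condCDF'
  simp only [heq]
  rw [intervalIntegral.integral_div, hnum]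
  exact div_self (ne_of_gt hD)

end Kernel

end DispersionAux

/-- **Dispersion corollary.** Under (A1)-(A2), the dispersion
`d_X(k, x̃) = sup_x min_{n < b^k} ‖F_K^{-1}(x̃, u^n) - x‖_∞` tends to `0` as `k → ∞`,
uniformly in `x̃ ∈ X`. -/
theorem dispersion_tendsto_zero
    {d b t : ℕ} (hd : 0 < d) (hb : 2 ≤ b)
    (u : ℕ → Fin d → ℝ) (hu : IsTSeq b t u)
    (κ : (Fin d → ℝ) → (Fin d → ℝ) → ℝ) (hκ : IsMarkovDensity κ)
    (hA1 : A1 κ) (Klow : ℝ) (hA2 : A2 κ Klow)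
    (G : (Fin d → ℝ) → (Fin d → ℝ) → (Fin d → ℝ)) (hG : IsInvRos κ G) :
    ∀ ε : ℝ, 0 < ε → ∃ k0 : ℕ, ∀ k : ℕ, k0 ≤ k →
      ∀ xt ∈ cube d, ∀ xx ∈ cube d, ∃ n : ℕ, n < b ^ k ∧ ‖G xt (u n) - xx‖ ≤ ε := by
  obtain ⟨hcont, hKlow, hlow⟩ := hA2
  obtain ⟨C, hC⟩ := ((isCompact_cube d).prod (isCompact_cube d)).exists_bound_of_continuousOn hcont
  set Kup := max C Klow with hKupdef
  have hup : ∀ x ∈ cube d, ∀ y ∈ cube d, κ x y ≤ Kup := fun x hx y hy =>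
    le_trans (le_trans (le_abs_self _) (hC (x, y) (Set.mk_mem_prod hx hy))) (le_max_left _ _)
  have hKK : Klow ≤ Kup := le_max_right _ _
  have hKup : 0 < Kup := lt_of_lt_of_le hKlow hKK
  set c0 : ℝ := Klow / Kup with hc0def
  have hc0 : 0 < c0 := div_pos hKlow hKup
  have Hmod : ∀ α : ℝ, ∃ δ : ℝ, 0 < δ ∧ (0 < α → ∀ (i : Fin d), ∀ x ∈ cube d, ∀ y ∈ cube d,
      ∀ y' ∈ cube d, dist y y' ≤ δ → ∀ s ∈ Set.Icc (0:ℝ) 1,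
      |condCDF' κ i x y s - condCDF' κ i x y' s| ≤ α) := by
    intro α
    rcases le_or_gt α 0 with h | h
    · exact ⟨1, one_pos, fun hα => absurd hα (not_lt_of_ge h)⟩
    · obtain ⟨δ, hδ, H⟩ := condCDF'_modulus hcont hKlow hlow hup α h
      exact ⟨δ, hδ, fun _ => H⟩
  choose Δ hΔpos hΔ using Hmod
  intro ε hε
  -- the chain of radii
  set sq : ℕ → ℝ := fun m => Nat.rec (min ε 1) (fun _ p => min p (Δ (c0 * p / 8))) m with hsqdef
  have hsq0 : sq 0 = min ε 1 := rfl
  have hsqsucc : ∀ m, sq (m+1) = min (sq m) (Δ (c0 * sq m / 8)) := fun m => rfl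
  have hsqpos : ∀ m, 0 < sq m := by
    intro m
    induction m with
    | zero => rw [hsq0]; exact lt_min hε one_pos
    | succ m ih => rw [hsqsucc]; exact lt_min ih (hΔpos _)
  have hsqanti : Antitone sq :=
    antitone_nat_of_succ_le (fun m => by rw [hsqsucc]; exact min_le_left _ _)
  set ρ : Fin d → ℝ := fun i => sq (d - 1 - (i:ℕ)) with hρdef
  have hρpos : ∀ i, 0 < ρ i := fun i => hsqpos _
  have hρle1 : ∀ i, ρ i ≤ 1 := fun i => le_trans (hsqanti (Nat.zero_le _)) (min_le_right _ _)
  have hρleε : ∀ i, ρ i ≤ ε := fun i => le_trans (hsqanti (Nat.zero_le _)) (min_le_left _ _)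
  have hcρ : ∀ i : Fin d, 0 < c0 * ρ i / 8 :=
    fun i => div_pos (mul_pos hc0 (hρpos i)) (by norm_num)
  have hρkey : ∀ i j : Fin d, (j:ℕ) < (i:ℕ) → ρ j ≤ Δ (c0 * ρ i / 8) := by
    intro i j hji
    have hi := i.isLt
    have h1 : d - 1 - (i:ℕ) + 1 ≤ d - 1 - (j:ℕ) := by omega
    calc ρ j = sq (d - 1 - (j:ℕ)) := rfl
      _ ≤ sq (d - 1 - (i:ℕ) + 1) := hsqanti h1
      _ ≤ Δ (c0 * sq (d - 1 - (i:ℕ)) / 8) := by rw [hsqsucc]; exact min_le_right _ _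
  have hb1 : (1:ℝ) < (b:ℝ) := by
    have : 1 < b := by omega
    exact_mod_cast this
  -- choice of exponents
  have hee : ∀ i : Fin d, ∃ e : ℕ, ((b:ℝ) ^ e)⁻¹ ≤ c0 * ρ i / 8 := by
    intro i
    obtain ⟨e, he⟩ := pow_unbounded_of_one_lt ((c0 * ρ i / 8)⁻¹) hb1
    refine ⟨e, ?_⟩
    have h8 : (0:ℝ) < (c0 * ρ i / 8)⁻¹ := inv_pos.2 (hcρ i)
    have h9 := inv_anti₀ h8 he.le
    rwa [inv_inv] at h9
  choose e he using hee
  refine ⟨t + ∑ j, e j, fun k hk xt hxt xx hxx => ?_⟩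
  set i0 : Fin d := ⟨0, hd⟩ with hi0
  set e' : Fin d → ℕ := fun j => e j + (if j = i0 then k - (t + ∑ j', e j') else 0) with he'def
  have hsum : (∑ j, e' j) = k - t := by
    rw [he'def, Finset.sum_add_distrib,
      Finset.sum_ite_eq' Finset.univ i0 (fun _ => k - (t + ∑ j', e j'))]
    simp only [Finset.mem_univ, if_true]
    omega
  have hbe : ∀ j, (0:ℝ) < (b:ℝ) ^ (e' j) := fun j => by positivity
  have he'big : ∀ j, ((b:ℝ) ^ (e' j))⁻¹ ≤ c0 * ρ j / 8 := by
    intro j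
    refine le_trans ?_ (he j)
    refine inv_anti₀ (by positivity) ?_
    exact pow_le_pow_right₀ hb1.le (Nat.le_add_right _ _)
  -- target intervals around xx
  set aa : Fin d → ℝ := fun j => max 0 (xx j - ρ j / 2) with haadef
  set bb : Fin d → ℝ := fun j => min 1 (xx j + ρ j / 2) with hbbdef
  have haaI : ∀ j, aa j ∈ Set.Icc (0:ℝ) 1 := by
    intro j
    refine ⟨le_max_left _ _, max_le zero_le_one ?_⟩
    have h1 := (hxx j).2; have h2 := hρpos j; linarith
  have hbbI : ∀ j, bb j ∈ Set.Icc (0:ℝ) 1 := by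
    intro j
    refine ⟨le_min zero_le_one ?_, min_le_left _ _⟩
    have h1 := (hxx j).1; have h2 := hρpos j; linarith
  have hgap : ∀ j, ρ j / 2 ≤ bb j - aa j := by
    intro j
    have h1 := (hxx j).1
    have h2 := (hxx j).2
    have h3 := hρpos j
    have h4 := hρle1 j
    rw [haadef, hbbdef]; dsimp only
    rcases le_total 0 (xx j - ρ j / 2) with h5 | h5
    · rw [max_eq_right h5]
      rcases le_total (xx j + ρ j / 2) 1 with h6 | h6
      · rw [min_eq_right h6]; linarith
      · rw [min_eq_left h6]; linarith
    · rw [max_eq_left h5]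
      rcases le_total (xx j + ρ j / 2) 1 with h6 | h6
      · rw [min_eq_right h6]; linarith
      · rw [min_eq_left h6]; linarith
  have haabb : ∀ j, aa j ≤ bb j := fun j => by have h1 := hgap j; have h2 := hρpos j; linarith
  set L : Fin d → ℝ := fun j => condCDF' κ j xt xx (aa j) with hLdef
  set U : Fin d → ℝ := fun j => condCDF' κ j xt xx (bb j) with hUdef
  have hL0 : ∀ j, 0 ≤ L j := fun j => condCDF'_nonneg hcont hKlow hlow hup hxt hxx j (haaI j)
  have hgapLU : ∀ j, c0 * (ρ j / 2) ≤ U j - L j := by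
    intro j
    calc c0 * (ρ j / 2) ≤ c0 * (bb j - aa j) := mul_le_mul_of_nonneg_left (hgap j) hc0.le
      _ ≤ U j - L j := condCDF'_gap hcont hKlow hlow hup hxt hxx j (haaI j) (hbbI j) (haabb j)
  have hU1 : ∀ j, U j ≤ 1 := by
    intro j
    have hF1 : condCDF' κ j xt xx 1 = 1 := condCDF'_one hcont hKlow hlow hxt hxx j
    have h1 : c0 * (1 - bb j) ≤ condCDF' κ j xt xx 1 - U j :=
      condCDF'_gap hcont hKlow hlow hup hxt hxx j (hbbI j) ⟨zero_le_one, le_refl 1⟩ (hbbI j).2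
    rw [hF1] at h1
    have h2 : 0 ≤ c0 * (1 - bb j) := mul_nonneg hc0.le (by linarith [(hbbI j).2])
    linarith
  set A : Fin d → ℝ := fun j => L j + c0 * ρ j / 8 with hAdef
  set B : Fin d → ℝ := fun j => U j - c0 * ρ j / 8 with hBdef
  have hAB : ∀ j, A j + 2 * ((b:ℝ) ^ (e' j))⁻¹ ≤ B j := by
    intro j
    have h1 := hgapLU j
    have h2 := he'big j
    rw [hAdef, hBdef]; dsimp only
    linarith
  have hA0 : ∀ j, 0 ≤ A j := by
    intro j
    have h1 := hL0 j
    have h2 : 0 ≤ c0 * ρ j / 8 := (hcρ j).le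
    rw [hAdef]; dsimp only; linarith
  have hB1 : ∀ j, B j ≤ 1 := by
    intro j
    have h1 := hU1 j
    have h2 : 0 ≤ c0 * ρ j / 8 := (hcρ j).le
    rw [hBdef]; dsimp only; linarith
  set cc : Fin d → ℕ := fun j => ⌈A j * (b:ℝ) ^ (e' j)⌉₊ with hccdef
  have hcc1 : ∀ j, A j ≤ (cc j : ℝ) / (b:ℝ) ^ (e' j) := by
    intro j
    rw [le_div_iff₀ (hbe j)]
    exact Nat.le_ceil _
  have hcc2 : ∀ j, ((cc j : ℝ) + 1) / (b:ℝ) ^ (e' j) ≤ B j := by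
    intro j
    have h1 : (cc j : ℝ) < A j * (b:ℝ) ^ (e' j) + 1 :=
      Nat.ceil_lt_add_one (mul_nonneg (hA0 j) (hbe j).le)
    rw [div_le_iff₀ (hbe j)]
    have h2 := mul_le_mul_of_nonneg_right (hAB j) (hbe j).le
    have h3 : ((b:ℝ) ^ (e' j))⁻¹ * (b:ℝ) ^ (e' j) = 1 := inv_mul_cancel₀ (ne_of_gt (hbe j))
    have h4 : (A j + 2 * ((b:ℝ) ^ (e' j))⁻¹) * (b:ℝ) ^ (e' j)
        = A j * (b:ℝ) ^ (e' j) + 2 * (((b:ℝ) ^ (e' j))⁻¹ * (b:ℝ) ^ (e' j)) := by ring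
    rw [h4, h3, mul_one] at h2
    linarith
  have hccb : ∀ j, cc j < b ^ (e' j) := by
    intro j
    have h1 : ((cc j : ℝ) + 1) ≤ (b:ℝ) ^ (e' j) := by
      have h0 := le_trans (hcc2 j) (hB1 j)
      rwa [div_le_one (hbe j)] at h0
    have h2 : ((cc j + 1 : ℕ) : ℝ) ≤ ((b ^ (e' j) : ℕ) : ℝ) := by push_cast; linarith
    have h3 : cc j + 1 ≤ b ^ (e' j) := by exact_mod_cast h2
    omega
  -- extract a net point in the box
  have hnb := hu.2 0 k (by omega : t ≤ k)
  have hcard := hnb e' cc hccb hsum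
  have hpos : 0 < ((Finset.Ico (0 * b ^ k) (0 * b ^ k + b ^ k)).filter
      (fun n => inBaryBox b e' cc (u n))).card := by
    rw [hcard]
    exact pow_pos (by omega) t
  obtain ⟨n, hn⟩ := Finset.card_pos.1 hpos
  rw [Finset.mem_filter, Finset.mem_Ico] at hn
  obtain ⟨⟨_, hnlt⟩, hbox⟩ := hn
  rw [zero_mul, zero_add] at hnlt
  have hun : ∀ i, u n i ∈ Set.Icc (0:ℝ) 1 := fun i => ⟨(hu.1 n i).1, (hu.1 n i).2.le⟩
  obtain ⟨hyc, hyRos⟩ := hG xt hxt (u n) hun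
  have hunA : ∀ j, A j ≤ u n j := fun j => le_trans (hcc1 j) (hbox j).1
  have hunB : ∀ j, u n j ≤ B j := fun j => le_trans (hbox j).2.le (hcc2 j)
  have hFy : ∀ j : Fin d, condCDF' κ j xt (G xt (u n)) (G xt (u n) j) = u n j :=
    fun j => congrFun hyRos j
  -- the coordinatewise induction
  have key : ∀ N : ℕ, ∀ j : Fin d, (j:ℕ) < N →
      aa j ≤ G xt (u n) j ∧ G xt (u n) j ≤ bb j := by
    intro N
    induction N with
    | zero => intro j hj; exact absurd hj (Nat.not_lt_zero _)
    | succ N IH =>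
      intro j hj
      rcases Nat.lt_or_ge (j:ℕ) N with hlt | hge
      · exact IH j hlt
      set y' : Fin d → ℝ := fun j' => if (j':ℕ) < (j:ℕ) then G xt (u n) j' else xx j' with hy'def
      have hy'c : y' ∈ cube d := by
        intro j'
        rw [hy'def]; dsimp only
        split_ifs
        · exact hyc j'
        · exact hxx j'
      have habs : ∀ j' : Fin d, (j':ℕ) < (j:ℕ) → |G xt (u n) j' - xx j'| ≤ ρ j' / 2 := by
        intro j' hj'
        have hIH := IH j' (by omega)
        have ha' : xx j' - ρ j' / 2 ≤ aa j' := le_max_right _ _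
        have hb' : bb j' ≤ xx j' + ρ j' / 2 := min_le_right _ _
        rw [abs_le]
        constructor
        · linarith [hIH.1]
        · linarith [hIH.2]
      have hdisty : dist y' xx ≤ Δ (c0 * ρ j / 8) := by
        refine (dist_pi_le_iff (hΔpos _).le).2 fun j' => ?_
        rw [hy'def]; dsimp only
        split_ifs with h'
        · rw [Real.dist_eq]
          refine le_trans (habs j' h') ?_
          have h1 : ρ j' ≤ Δ (c0 * ρ j / 8) := hρkey j j' h'
          have h2 := hρpos j'
          linarith
        · simpa using (hΔpos _).le
      have hΔj := hΔ (c0 * ρ j / 8) (hcρ j) j xt hxt y' hy'c xx hxx hdisty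
      have hcongr : ∀ s : ℝ, condCDF' κ j xt (G xt (u n)) s = condCDF' κ j xt y' s := by
        intro s
        refine condCDF'_congr κ j xt (fun j' hj' => ?_) s
        rw [hy'def]; dsimp only
        rw [if_pos hj']
      have hlow1 : condCDF' κ j xt (G xt (u n)) (aa j) ≤ u n j := by
        have h1 : |condCDF' κ j xt y' (aa j) - L j| ≤ c0 * ρ j / 8 := hΔj (aa j) (haaI j)
        have h3 := (abs_le.1 h1).2
        have h2 : L j + c0 * ρ j / 8 ≤ u n j := hunA j
        rw [hcongr (aa j)]
        linarith
      have hup1 : u n j ≤ condCDF' κ j xt (G xt (u n)) (bb j) := by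
        have h1 : |condCDF' κ j xt y' (bb j) - U j| ≤ c0 * ρ j / 8 := hΔj (bb j) (hbbI j)
        have h3 := (abs_le.1 h1).1
        have h2 : u n j ≤ U j - c0 * ρ j / 8 := hunB j
        rw [hcongr (bb j)]
        linarith
      have hmono := hA1 xt hxt (G xt (u n)) hyc j
      have hyj : G xt (u n) j ∈ Set.Icc (0:ℝ) 1 := hyc j
      constructor
      · by_contra hcon
        push_neg at hcon
        have h5 := hmono hyj (haaI j) hcon
        have h6 : condCDF' κ j xt (G xt (u n)) (G xt (u n) j)
            < condCDF' κ j xt (G xt (u n)) (aa j) := h5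
        rw [hFy j] at h6
        linarith
      · by_contra hcon
        push_neg at hcon
        have h5 := hmono (hbbI j) hyj hcon
        have h6 : condCDF' κ j xt (G xt (u n)) (bb j)
            < condCDF' κ j xt (G xt (u n)) (G xt (u n) j) := h5
        rw [hFy j] at h6
        linarith
  refine ⟨n, hnlt, ?_⟩
  rw [pi_norm_le_iff_of_nonneg hε.le]
  intro j
  have h := key d j j.isLt
  have ha' : xx j - ρ j / 2 ≤ aa j := le_max_right _ _
  have hb' : bb j ≤ xx j + ρ j / 2 := min_le_right _ _
  have habs : |G xt (u n) j - xx j| ≤ ρ j / 2 := by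
    rw [abs_le]
    constructor
    · linarith [h.1]
    · linarith [h.2]
  have h2 := hρleε j
  have h3 := hρpos j
  simp only [Pi.sub_apply, Real.norm_eq_abs]
  linarith
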